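/- Let n ≥ 2, σ > 0, and let V₁(i,j), V₂(i,j) (1 ≤ i,j ≤ n) be the doubly-centered Gaussian kernel matrices built from two permutations y₁, y₂ of {1/n, 2/n, …, 1} respectively: V_c(i,j) = k_σ(y_c(i), y_c(j)) − (1/n)Σ_a k_σ(y_c(a), y_c(j)) − (1/n)Σ_b k_σ(y_c(i), y_c(b)) + (1/n²)Σ_{a,b} k_σ(y_c(a), y_c(b)). Then Σ_{i,j} V₁(i,j)V₂(i,j) ≤ [Σ_{i,j} V₁(i,j)² · Σ_{i,j} V₂(i,j)²]^{1/2}, with Σ_{i,j}V₁² = Σ_{i,j}V₂², and equality holds if and only if either y₂(i) = y₁(i) for all i, or y₂(i) = (n+1)/n − y₁(i) for all i. -/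

import Mathlib

open Finset Real

noncomputable def gker (σ u v : ℝ) : ℝ := Real.exp (-(u - v) ^ 2 / (2 * σ ^ 2))

lemma gker_symm (σ u v : ℝ) : gker σ u v = gker σ v u := by
  unfold gker; congr 1; ring

lemma gker_self (σ u : ℝ) : gker σ u u = 1 := by
  unfold gker; simp

theorem stmt_15 (n : ℕ) (hn : 2 ≤ n) (σ : ℝ) (hσ : 0 < σ)
    (π₁ π₂ : Equiv.Perm (Fin n)) (y₁ y₂ : Fin n → ℝ)
    (hy₁ : ∀ i, y₁ i = ((π₁ i : ℕ) + 1 : ℝ) / n)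
    (hy₂ : ∀ i, y₂ i = ((π₂ i : ℕ) + 1 : ℝ) / n)
    (V₁ V₂ : Fin n → Fin n → ℝ)
    (hV₁ : ∀ i j, V₁ i j =
      Real.exp (-(y₁ i - y₁ j) ^ 2 / (2 * σ ^ 2)) -
        (1 / n) * ∑ a, Real.exp (-(y₁ a - y₁ j) ^ 2 / (2 * σ ^ 2)) -
        (1 / n) * ∑ b, Real.exp (-(y₁ i - y₁ b) ^ 2 / (2 * σ ^ 2)) +
        (1 / (n : ℝ) ^ 2) * ∑ a, ∑ b, Real.exp (-(y₁ a - y₁ b) ^ 2 / (2 * σ ^ 2)))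
    (hV₂ : ∀ i j, V₂ i j =
      Real.exp (-(y₂ i - y₂ j) ^ 2 / (2 * σ ^ 2)) -
        (1 / n) * ∑ a, Real.exp (-(y₂ a - y₂ j) ^ 2 / (2 * σ ^ 2)) -
        (1 / n) * ∑ b, Real.exp (-(y₂ i - y₂ b) ^ 2 / (2 * σ ^ 2)) +
        (1 / (n : ℝ) ^ 2) * ∑ a, ∑ b, Real.exp (-(y₂ a - y₂ b) ^ 2 / (2 * σ ^ 2))) :
    (∑ i, ∑ j, V₁ i j * V₂ i j ≤
        Real.sqrt ((∑ i, ∑ j, (V₁ i j) ^ 2) * ∑ i, ∑ j, (V₂ i j) ^ 2)) ∧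
    (∑ i, ∑ j, (V₁ i j) ^ 2 = ∑ i, ∑ j, (V₂ i j) ^ 2) ∧
    ((∑ i, ∑ j, V₁ i j * V₂ i j =
        Real.sqrt ((∑ i, ∑ j, (V₁ i j) ^ 2) * ∑ i, ∑ j, (V₂ i j) ^ 2)) ↔
      ((∀ i, y₂ i = y₁ i) ∨ ∀ i, y₂ i = ((n : ℝ) + 1) / n - y₁ i)) := by
  have hn0 : (0 : ℝ) < n := by positivity
  have hnne : (n : ℝ) ≠ 0 := ne_of_gt hn0
  -- rewrite hypotheses in terms of gker
  have hK₁ : ∀ i j, V₁ i j = gker σ (y₁ i) (y₁ j) -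
      (1 / n) * ∑ a, gker σ (y₁ a) (y₁ j) -
      (1 / n) * ∑ b, gker σ (y₁ i) (y₁ b) +
      (1 / (n : ℝ) ^ 2) * ∑ a, ∑ b, gker σ (y₁ a) (y₁ b) := hV₁
  have hK₂ : ∀ i j, V₂ i j = gker σ (y₂ i) (y₂ j) -
      (1 / n) * ∑ a, gker σ (y₂ a) (y₂ j) -
      (1 / n) * ∑ b, gker σ (y₂ i) (y₂ b) +
      (1 / (n : ℝ) ^ 2) * ∑ a, ∑ b, gker σ (y₂ a) (y₂ b) := hV₂
  -- the permutation relating the two point configurations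
  set τ : Equiv.Perm (Fin n) := π₂.trans π₁.symm with hτdef
  have hτ : ∀ i, y₂ i = y₁ (τ i) := by
    intro i
    rw [hy₂, hy₁]
    simp [hτdef]
  -- V₂ is V₁ reindexed by τ
  have hrow : ∀ j, ∑ a, gker σ (y₂ a) (y₂ j) = ∑ a, gker σ (y₁ a) (y₁ (τ j)) := by
    intro j
    simp only [hτ]
    exact Equiv.sum_comp τ (fun a => gker σ (y₁ a) (y₁ (τ j)))
  have htot : (∑ a, ∑ b, gker σ (y₂ a) (y₂ b)) = ∑ a, ∑ b, gker σ (y₁ a) (y₁ b) := by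
    simp only [hτ]
    rw [Equiv.sum_comp τ (fun a => ∑ b, gker σ (y₁ a) (y₁ (τ b)))]
    exact Finset.sum_congr rfl fun a _ => Equiv.sum_comp τ (fun b => gker σ (y₁ a) (y₁ b))
  have hVτ : ∀ i j, V₂ i j = V₁ (τ i) (τ j) := by
    intro i j
    have hcol : ∑ b, gker σ (y₂ i) (y₂ b) = ∑ b, gker σ (y₁ (τ i)) (y₁ b) := by
      simp only [hτ]
      exact Equiv.sum_comp τ (fun b => gker σ (y₁ (τ i)) (y₁ b))
    rw [hK₂ i j, hK₁ (τ i) (τ j), hrow j, htot, hcol, hτ i, hτ j]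
  -- norms agree
  have hnorm : (∑ i, ∑ j, (V₁ i j) ^ 2) = ∑ i, ∑ j, (V₂ i j) ^ 2 := by
    simp only [hVτ]
    have h1 : ∀ i, ∑ j, V₁ (τ i) (τ j) ^ 2 = ∑ j, V₁ (τ i) j ^ 2 :=
      fun i => Equiv.sum_comp τ (fun j => V₁ (τ i) j ^ 2)
    simp only [h1]
    exact (Equiv.sum_comp τ (fun i => ∑ j, V₁ i j ^ 2)).symm
  have hS1nonneg : (0 : ℝ) ≤ ∑ i, ∑ j, (V₁ i j) ^ 2 :=
    Finset.sum_nonneg fun i _ => Finset.sum_nonneg fun j _ => sq_nonneg _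
  -- Cauchy-Schwarz
  have hCS : ∑ i, ∑ j, V₁ i j * V₂ i j ≤
      Real.sqrt ((∑ i, ∑ j, (V₁ i j) ^ 2) * ∑ i, ∑ j, (V₂ i j) ^ 2) := by
    have h1 : (∑ p : Fin n × Fin n, V₁ p.1 p.2 * V₂ p.1 p.2) ^ 2 ≤
        (∑ p : Fin n × Fin n, (V₁ p.1 p.2) ^ 2) * ∑ p : Fin n × Fin n, (V₂ p.1 p.2) ^ 2 :=
      Finset.sum_mul_sq_le_sq_mul_sq _ _ _
    rw [Fintype.sum_prod_type, Fintype.sum_prod_type, Fintype.sum_prod_type] at h1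
    calc ∑ i, ∑ j, V₁ i j * V₂ i j ≤ |∑ i, ∑ j, V₁ i j * V₂ i j| := le_abs_self _
      _ = Real.sqrt ((∑ i, ∑ j, V₁ i j * V₂ i j) ^ 2) := (Real.sqrt_sq_eq_abs _).symm
      _ ≤ _ := Real.sqrt_le_sqrt h1
  refine ⟨hCS, hnorm, ?_⟩
  constructor
  · -- forward direction: equality ⇒ rigidity
    intro heq
    rw [← hnorm, Real.sqrt_mul_self hS1nonneg] at heq
    have heq2 : ∑ i, ∑ j, V₁ i j * V₂ i j = ∑ i, ∑ j, (V₂ i j) ^ 2 := by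
      rw [heq, hnorm]
    -- V₁ = V₂
    have h0 : ∑ i, ∑ j, (V₁ i j - V₂ i j) ^ 2 = 0 := by
      have e : ∀ i : Fin n, ∀ j : Fin n, (V₁ i j - V₂ i j) ^ 2 =
          V₁ i j ^ 2 - 2 * (V₁ i j * V₂ i j) + V₂ i j ^ 2 := fun i j => by ring
      simp only [e, Finset.sum_add_distrib, Finset.sum_sub_distrib, ← Finset.mul_sum]
      linarith
    have hVeq : ∀ i j, V₁ i j = V₂ i j := by
      have h1 := (Finset.sum_eq_zero_iff_of_nonneg (fun i _ =>
        Finset.sum_nonneg fun j _ => sq_nonneg (V₁ i j - V₂ i j))).mp h0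
      intro i j
      have h2 := (Finset.sum_eq_zero_iff_of_nonneg (fun j _ =>
        sq_nonneg (V₁ i j - V₂ i j))).mp (h1 i (Finset.mem_univ i)) j (Finset.mem_univ j)
      have := pow_eq_zero_iff (n := 2) (by norm_num) |>.mp h2
      linarith
    -- row sums
    have hrsym : ∀ i, (∑ b, gker σ (y₁ i) (y₁ b)) = ∑ a, gker σ (y₁ a) (y₁ i) := by
      intro i
      exact Finset.sum_congr rfl fun b _ => gker_symm σ (y₁ i) (y₁ b)
    have hrinv : ∀ i, (∑ a, gker σ (y₁ a) (y₁ (τ i))) = ∑ a, gker σ (y₁ a) (y₁ i) := by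
      intro i
      have h1 : V₁ i i = V₁ (τ i) (τ i) := by rw [← hVτ i i]; exact hVeq i i
      rw [hK₁ i i, hK₁ (τ i) (τ i), gker_self, gker_self, hrsym i, hrsym (τ i)] at h1
      have hpos : (0 : ℝ) < 1 / n := by positivity
      have h2 : (1 / (n : ℝ)) * ∑ a, gker σ (y₁ a) (y₁ (τ i)) =
          (1 / n) * ∑ a, gker σ (y₁ a) (y₁ i) := by linarith
      exact mul_left_cancel₀ (ne_of_gt hpos) h2
    -- kernel matrices agree
    have hker : ∀ i j, gker σ (y₂ i) (y₂ j) = gker σ (y₁ i) (y₁ j) := by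
      intro i j
      have h1 : V₁ i j = V₁ (τ i) (τ j) := by rw [← hVτ i j]; exact hVeq i j
      rw [hK₁ i j, hK₁ (τ i) (τ j), hrsym i, hrsym (τ i), hrinv i, hrinv j] at h1
      have h2 : gker σ (y₁ i) (y₁ j) = gker σ (y₁ (τ i)) (y₁ (τ j)) := by linarith
      rw [hτ i, hτ j, ← h2]
    -- distances agree
    have habs : ∀ i j, |y₂ i - y₂ j| = |y₁ i - y₁ j| := by
      intro i j
      have h1 := hker i j
      unfold gker at h1
      rw [Real.exp_eq_exp] at h1
      have h2σ : (2 * σ ^ 2) ≠ 0 := by positivity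
      have h2 : (y₂ i - y₂ j) ^ 2 = (y₁ i - y₁ j) ^ 2 := by
        field_simp at h1
        linarith
      rw [← Real.sqrt_sq_eq_abs, ← Real.sqrt_sq_eq_abs, h2]
    -- bounds on the values
    have hb1 : ∀ i, 1 / (n : ℝ) ≤ y₁ i ∧ y₁ i ≤ 1 := by
      intro i
      rw [hy₁]
      constructor
      · have h01 : (1:ℝ) ≤ ((π₁ i : ℕ) : ℝ) + 1 := by have := (Nat.cast_nonneg (π₁ i : ℕ) : (0:ℝ) ≤ _); linarith
        gcongr
      · rw [div_le_one hn0]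
        have : (π₁ i : ℕ) < n := (π₁ i).isLt
        have : ((π₁ i : ℕ) : ℝ) + 1 ≤ n := by exact_mod_cast Nat.succ_le_of_lt this
        linarith
    have hb2 : ∀ i, 1 / (n : ℝ) ≤ y₂ i ∧ y₂ i ≤ 1 := by
      intro i
      rw [hy₂]
      constructor
      · have h01 : (1:ℝ) ≤ ((π₂ i : ℕ) : ℝ) + 1 := by have := (Nat.cast_nonneg (π₂ i : ℕ) : (0:ℝ) ≤ _); linarith
        gcongr
      · rw [div_le_one hn0]
        have : (π₂ i : ℕ) < n := (π₂ i).isLt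
        have : ((π₂ i : ℕ) : ℝ) + 1 ≤ n := by exact_mod_cast Nat.succ_le_of_lt this
        linarith
    -- special indices
    set i₀ : Fin n := π₁.symm ⟨0, by omega⟩ with hi₀
    set i₁ : Fin n := π₁.symm ⟨n - 1, by omega⟩ with hi₁
    have hy₁i₀ : y₁ i₀ = 1 / n := by
      rw [hy₁, hi₀]
      simp
    have hy₁i₁ : y₁ i₁ = 1 := by
      rw [hy₁, hi₁]
      simp only [Equiv.apply_symm_apply]
      have : ((n - 1 : ℕ) : ℝ) = (n : ℝ) - 1 := by
        have : (1:ℕ) ≤ n := by omega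
        push_cast [this]
        ring
      rw [this]
      field_simp
      ring
    have hd : |y₂ i₁ - y₂ i₀| = 1 - 1 / n := by
      rw [habs i₁ i₀, hy₁i₀, hy₁i₁]
      have h1n : 1 / (n : ℝ) ≤ 1 := by
        rw [div_le_one hn0]
        exact_mod_cast Nat.one_le_of_lt hn
      rw [abs_of_nonneg (by linarith)]
    have hi₀val : y₂ i₀ = 1 / n ∨ y₂ i₀ = 1 := by
      have h1n : 1 / (n : ℝ) ≤ 1 := by
        rw [div_le_one hn0]
        exact_mod_cast Nat.one_le_of_lt hn
      rcases (abs_eq (by linarith : (0:ℝ) ≤ 1 - 1 / n)).mp hd with h | h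
      · -- y₂ i₁ - y₂ i₀ = 1 - 1/n
        left
        have := (hb2 i₁).2
        have := (hb2 i₀).1
        linarith
      · -- y₂ i₀ - y₂ i₁ = 1 - 1/n
        right
        have := (hb2 i₀).2
        have := (hb2 i₁).1
        linarith
    rcases hi₀val with h | h
    · left
      intro i
      have h1 := habs i i₀
      rw [h, hy₁i₀] at h1
      have hl1 := (hb1 i).1
      have hl2 := (hb2 i).1
      rw [abs_of_nonneg (by linarith), abs_of_nonneg (by linarith)] at h1
      linarith
    · right
      intro i
      have h1 := habs i i₀
      rw [h, hy₁i₀] at h1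
      have hl1 := (hb1 i).1
      have hl2 := (hb2 i).2
      rw [abs_of_nonpos (by linarith), abs_of_nonneg (by linarith)] at h1
      have : ((n : ℝ) + 1) / n = 1 + 1 / n := by field_simp
      rw [this]
      linarith
  · -- backward direction
    intro hcase
    have hVeq : ∀ i j, V₂ i j = V₁ i j := by
      have hker : ∀ a b, Real.exp (-(y₂ a - y₂ b) ^ 2 / (2 * σ ^ 2)) =
          Real.exp (-(y₁ a - y₁ b) ^ 2 / (2 * σ ^ 2)) := by
        intro a b
        rcases hcase with hc | hc
        · rw [hc a, hc b]
        · rw [hc a, hc b]; congr 1; ring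
      intro i j
      rw [hV₂ i j, hV₁ i j]
      simp only [hker]
    have hsum : ∑ i, ∑ j, V₁ i j * V₂ i j = ∑ i, ∑ j, (V₁ i j) ^ 2 := by
      refine Finset.sum_congr rfl fun i _ => Finset.sum_congr rfl fun j _ => ?_
      rw [hVeq i j]; ring
    rw [hsum, ← hnorm, Real.sqrt_mul_self hS1nonneg]
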